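/- Let f,g: ℝⁿ × ℝᵐ → ℝ, with f lower-bounded, x ↦ ∇ₓf(x,y) G₁-Lipschitz for every y, y ↦ ∇_y f(x,y) G₂(x)-Lipschitz for every x, and step size α < 2/G₁. If there exists B > 0 such that β⟨∇_y f(x,y), ∇_y g(x,y)⟩ ≥ (G₂(x)β²/2)‖∇_y g(x,y)‖² + B‖∇_y f(x,y)‖² for all (x,y), then the alternating updates x_{t+1} = xₜ - α∇ₓf(xₜ,yₜ), y_{t+1} = yₜ - β∇_y g(x_{t+1},yₜ) satisfy ‖∇ₓf(xₜ,yₜ)‖ → 0 and ‖∇_y f(x_{t+1},yₜ)‖ → 0. -/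

import Mathlib

open Filter RealInnerProductSpace InnerProductSpace

lemma my_descent {F : Type*} [NormedAddCommGroup F] [InnerProductSpace ℝ F] [CompleteSpace F]
    (f : F → ℝ) (hd : Differentiable ℝ f) (L : NNReal)
    (hl : LipschitzWith L (fun z => gradient f z)) (a v : F) :
    f (a + v) ≤ f a + ⟪gradient f a, v⟫ + (L : ℝ) / 2 * ‖v‖ ^ 2 := by
  set h : ℝ → ℝ := fun s => f (a + s • v) - s * ⟪gradient f a, v⟫ - s ^ 2 * ((L : ℝ) / 2 * ‖v‖ ^ 2)
    with hh
  have hderiv : ∀ s : ℝ, HasDerivAt h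
      (⟪gradient f (a + s • v), v⟫ - ⟪gradient f a, v⟫ - 2 * s * ((L : ℝ) / 2 * ‖v‖ ^ 2)) s := by
    intro s
    have hc : HasDerivAt (fun s : ℝ => a + s • v) v s := by
      simpa using ((hasDerivAt_id s).smul_const v).const_add a
    have h1 : HasDerivAt (fun s : ℝ => f (a + s • v)) (⟪gradient f (a + s • v), v⟫) s := by
      have := ((hd (a + s • v)).hasGradientAt.hasFDerivAt).comp_hasDerivAt s hc
      simpa [toDual_apply_apply, Function.comp_def] using this
    have h2 : HasDerivAt (fun s : ℝ => s * ⟪gradient f a, v⟫) (⟪gradient f a, v⟫) s := by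
      simpa using (hasDerivAt_id s).mul_const (⟪gradient f a, v⟫)
    have h3 : HasDerivAt (fun s : ℝ => s ^ 2 * ((L : ℝ) / 2 * ‖v‖ ^ 2))
        (2 * s * ((L : ℝ) / 2 * ‖v‖ ^ 2)) s := by
      have := (hasDerivAt_pow 2 s).mul_const ((L : ℝ) / 2 * ‖v‖ ^ 2)
      simpa [mul_comm] using this
    exact (h1.sub h2).sub h3
  have hanti : AntitoneOn h (Set.Icc 0 1) := by
    apply antitoneOn_of_deriv_nonpos (convex_Icc 0 1)
    · exact fun s _ => (hderiv s).continuousAt.continuousWithinAt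
    · intro s hs
      exact (hderiv s).differentiableAt.differentiableWithinAt
    · intro s hs
      rw [interior_Icc] at hs
      rw [(hderiv s).deriv]
      have hb : ⟪gradient f (a + s • v) - gradient f a, v⟫ ≤ (L : ℝ) * (s * ‖v‖ ^ 2) := by
        calc ⟪gradient f (a + s • v) - gradient f a, v⟫
            ≤ ‖gradient f (a + s • v) - gradient f a‖ * ‖v‖ := real_inner_le_norm _ _
          _ ≤ ((L : ℝ) * ‖(a + s • v) - a‖) * ‖v‖ := by
              gcongr
              have := hl.dist_le_mul (a + s • v) a
              rwa [dist_eq_norm, dist_eq_norm] at this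
          _ = (L : ℝ) * (s * ‖v‖ ^ 2) := by
              rw [add_sub_cancel_left, norm_smul, Real.norm_eq_abs,
                abs_of_pos hs.1]
              ring
      have := inner_sub_left (𝕜 := ℝ) (gradient f (a + s • v)) (gradient f a) v
      nlinarith [hs.1.le, hs.2.le]
  have h10 : h 1 ≤ h 0 := hanti (by norm_num) (by norm_num) (by norm_num)
  simp only [hh, one_smul, one_pow, one_mul, zero_smul, add_zero, zero_pow, zero_mul, sub_zero,
    pow_two] at h10
  linarith [h10]


theorem stmt_9 {n m : ℕ}
    (f g : EuclideanSpace ℝ (Fin n) → EuclideanSpace ℝ (Fin m) → ℝ)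
    (hbdd : ∃ c : ℝ, ∀ x y, c ≤ f x y)
    (G₁ : NNReal) (hG₁ : 0 < (G₁ : ℝ))
    (G₂ : EuclideanSpace ℝ (Fin n) → NNReal)
    (hdx : ∀ y, Differentiable ℝ (fun x => f x y))
    (hdy : ∀ x, Differentiable ℝ (fun y => f x y))
    (hlx : ∀ y, LipschitzWith G₁ (fun x => gradient (fun x' => f x' y) x))
    (hly : ∀ x, LipschitzWith (G₂ x) (fun y => gradient (fun y' => f x y') y))
    (α β : ℝ) (hα : 0 < α) (hα2 : α < 2 / (G₁ : ℝ)) (hβ : 0 < β)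
    (B : ℝ) (hB : 0 < B)
    (hinner : ∀ x y,
      β * ⟪gradient (fun y' => f x y') y, gradient (fun y' => g x y') y⟫
        ≥ ((G₂ x : ℝ) * β ^ 2 / 2) * ‖gradient (fun y' => g x y') y‖ ^ 2
          + B * ‖gradient (fun y' => f x y') y‖ ^ 2)
    (x : ℕ → EuclideanSpace ℝ (Fin n)) (y : ℕ → EuclideanSpace ℝ (Fin m))
    (hxupd : ∀ t, x (t + 1) = x t - α • gradient (fun x' => f x' (y t)) (x t))
    (hyupd : ∀ t, y (t + 1) = y t - β • gradient (fun y' => g (x (t + 1)) y') (y t)) :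
    Tendsto (fun t => ‖gradient (fun x' => f x' (y t)) (x t)‖) atTop (nhds 0) ∧
    Tendsto (fun t => ‖gradient (fun y' => f (x (t + 1)) y') (y t)‖) atTop (nhds 0) := by
  obtain ⟨c, hc⟩ := hbdd
  set gx : ℕ → EuclideanSpace ℝ (Fin n) :=
    fun t => gradient (fun x' => f x' (y t)) (x t) with hgx
  set gy : ℕ → EuclideanSpace ℝ (Fin m) :=
    fun t => gradient (fun y' => f (x (t + 1)) y') (y t) with hgy
  set c1 : ℝ := α - (G₁ : ℝ) * α ^ 2 / 2 with hc1
  have hc1pos : 0 < c1 := by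
    have : (G₁ : ℝ) * α < 2 := by
      rw [lt_div_iff₀ hG₁] at hα2
      linarith [hα2]
    have h2 : (G₁ : ℝ) * α ^ 2 / 2 < α := by
      rw [div_lt_iff₀ (by norm_num : (0:ℝ) < 2)]
      nlinarith
    rw [hc1]; linarith
  -- x-step descent
  have hxstep : ∀ t, f (x (t + 1)) (y t) ≤ f (x t) (y t) - c1 * ‖gx t‖ ^ 2 := by
    intro t
    have hup : x (t + 1) = x t + (-α) • gx t := by
      rw [hxupd t]; module
    have := my_descent (fun x' => f x' (y t)) (hdx (y t)) G₁ (hlx (y t)) (x t) ((-α) • gx t)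
    rw [← hup] at this
    have hin : ⟪gx t, (-α) • gx t⟫ = -α * ‖gx t‖ ^ 2 := by
      rw [real_inner_smul_right, real_inner_self_eq_norm_sq]
    have hn : ‖(-α) • gx t‖ ^ 2 = α ^ 2 * ‖gx t‖ ^ 2 := by
      rw [norm_smul, mul_pow, Real.norm_eq_abs, sq_abs]; ring
    rw [hin, hn] at this
    calc f (x (t + 1)) (y t) ≤ f (x t) (y t) + (-α * ‖gx t‖ ^ 2)
          + (G₁ : ℝ) / 2 * (α ^ 2 * ‖gx t‖ ^ 2) := this
      _ = f (x t) (y t) - c1 * ‖gx t‖ ^ 2 := by rw [hc1]; ring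
  -- y-step descent
  have hystep : ∀ t, f (x (t + 1)) (y (t + 1)) ≤ f (x (t + 1)) (y t) - B * ‖gy t‖ ^ 2 := by
    intro t
    set gg := gradient (fun y' => g (x (t + 1)) y') (y t) with hgg
    have hup : y (t + 1) = y t + (-β) • gg := by
      rw [hyupd t]; module
    have := my_descent (fun y' => f (x (t + 1)) y') (hdy (x (t + 1))) (G₂ (x (t + 1)))
      (hly (x (t + 1))) (y t) ((-β) • gg)
    rw [← hup] at this
    have hin : ⟪gy t, (-β) • gg⟫ = -(β * ⟪gy t, gg⟫) := by
      rw [real_inner_smul_right]; ring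
    have hn : ‖(-β) • gg‖ ^ 2 = β ^ 2 * ‖gg‖ ^ 2 := by
      rw [norm_smul, mul_pow, Real.norm_eq_abs, sq_abs]; ring
    rw [hin, hn] at this
    have hi := hinner (x (t + 1)) (y t)
    calc f (x (t + 1)) (y (t + 1))
        ≤ f (x (t + 1)) (y t) + -(β * ⟪gy t, gg⟫)
          + (G₂ (x (t + 1)) : ℝ) / 2 * (β ^ 2 * ‖gg‖ ^ 2) := this
      _ ≤ f (x (t + 1)) (y t) - B * ‖gy t‖ ^ 2 := by
          have : (G₂ (x (t + 1)) : ℝ) * β ^ 2 / 2 * ‖gg‖ ^ 2 + B * ‖gy t‖ ^ 2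
              ≤ β * ⟪gy t, gg⟫ := hi
          nlinarith [this]
  -- combined decrease
  set h : ℕ → ℝ := fun t => c1 * ‖gx t‖ ^ 2 + B * ‖gy t‖ ^ 2 with hhdef
  have hnonneg : ∀ t, 0 ≤ h t := fun t => by positivity
  have hdec : ∀ t, f (x (t + 1)) (y (t + 1)) ≤ f (x t) (y t) - h t := by
    intro t
    have := hxstep t
    have := hystep t
    simp only [hhdef]
    linarith
  have hsum : ∀ T : ℕ, ∑ t ∈ Finset.range T, h t ≤ f (x 0) (y 0) - f (x T) (y T) := by
    intro T
    induction T with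
    | zero => simp
    | succ T ih =>
        rw [Finset.sum_range_succ]
        have := hdec T
        linarith
  have hsummable : Summable h := by
    apply summable_of_sum_range_le hnonneg (c := f (x 0) (y 0) - c)
    intro T
    have := hc (x T) (y T)
    linarith [hsum T]
  have hto : Tendsto h atTop (nhds 0) := hsummable.tendsto_atTop_zero
  have hsq1 : Tendsto (fun t => ‖gx t‖ ^ 2) atTop (nhds 0) := by
    apply squeeze_zero (fun t => by positivity) (g := fun t => h t / c1)
    · intro t
      rw [le_div_iff₀ hc1pos]
      have := hnonneg t
      simp only [hhdef]
      nlinarith [sq_nonneg (‖gy t‖), hB.le, norm_nonneg (gy t)]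
    · simpa using hto.div_const c1
  have hsq2 : Tendsto (fun t => ‖gy t‖ ^ 2) atTop (nhds 0) := by
    apply squeeze_zero (fun t => by positivity) (g := fun t => h t / B)
    · intro t
      rw [le_div_iff₀ hB]
      simp only [hhdef]
      nlinarith [sq_nonneg (‖gx t‖), hc1pos.le]
    · simpa using hto.div_const B
  constructor
  · have := hsq1.sqrt
    rw [Real.sqrt_zero] at this
    convert this using 2 with t
    rw [Real.sqrt_sq (norm_nonneg _)]
  · have := hsq2.sqrt
    rw [Real.sqrt_zero] at this
    convert this using 2 with t
    rw [Real.sqrt_sq (norm_nonneg _)]
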